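/- arXiv:2603.18730 — 4 statements merged into one kernel-verified Lean document; each statement's English description precedes it below -/
import Mathlib

section
/- For the expected total gain objective ETG(b) = Σ_{m=1}^{M} π_m · Σ_{i=1}^{m} Σ_{j=1}^{S} w_j · b_{ij}, if a feasible solution b has NightGain(i) < NightGain(i+1) for some night i (where NightGain(i) = Σ_j w_j·b_{ij}), then the solution b' obtained by swapping the schedules of nights i and i+1 is feasible and satisfies ETG(b') ≥ ETG(b). -/
/-- swapping two adjacent nights where the gain increases yields a
feasible solution with at least as large an expected total gain. -/
theorem swap_increasing_nights_improves
    (M S : ℕ) (π w : ℕ → ℝ)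
    (hπ : ∀ m, 0 ≤ π m) (hw : ∀ j, 0 ≤ w j)
    (Feasible : (ℕ → ℕ → Bool) → Prop)
    -- intra-night feasibility is identical across nights, so permuting nights
    -- preserves feasibility
    (hperm : ∀ (b : ℕ → ℕ → Bool) (σ : Equiv.Perm ℕ),
      Feasible b → Feasible (fun i j => b (σ i) j))
    (b : ℕ → ℕ → Bool) (hb : Feasible b)
    (NightGain : (ℕ → ℕ → Bool) → ℕ → ℝ)
    (hNG : ∀ b' i, NightGain b' i =
      ∑ j ∈ Finset.Icc 1 S, w j * (if b' i j then (1:ℝ) else 0))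
    (ETG : (ℕ → ℕ → Bool) → ℝ)
    (hETG : ∀ b', ETG b' =
      ∑ m ∈ Finset.Icc 1 M, π m * ∑ i ∈ Finset.Icc 1 m, NightGain b' i)
    (i : ℕ) (hi1 : 1 ≤ i) (hiM : i + 1 ≤ M)
    (hlt : NightGain b i < NightGain b (i + 1)) :
    Feasible (fun i' j => b (Equiv.swap i (i + 1) i') j) ∧
      ETG b ≤ ETG (fun i' j => b (Equiv.swap i (i + 1) i') j) := by
  set b' : ℕ → ℕ → Bool := fun i' j => b (Equiv.swap i (i + 1) i') j with hb'
  have hNG' : ∀ k, NightGain b' k = NightGain b (Equiv.swap i (i + 1) k) := by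
    intro k
    rw [hNG, hNG]
  refine ⟨hperm b _ hb, ?_⟩
  rw [hETG, hETG]
  apply Finset.sum_le_sum
  intro m hm
  apply mul_le_mul_of_nonneg_left _ (hπ m)
  rcases le_or_gt m i with hmi | him
  · -- m ≤ i : termwise comparison
    apply Finset.sum_le_sum
    intro k hk
    rw [hNG']
    rcases eq_or_ne k i with rfl | hki
    · rw [Equiv.swap_apply_left]
      exact hlt.le
    · have hk2 : k ≠ i + 1 := by
        have := (Finset.mem_Icc.mp hk).2
        omega
      rw [Equiv.swap_apply_of_ne_of_ne hki hk2]
  · -- i < m, so i+1 ≤ m: the swap permutes Icc 1 m, sums equal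
    have key : ∑ k ∈ Finset.Icc 1 m, NightGain b' k
        = ∑ k ∈ Finset.Icc 1 m, NightGain b k := by
      refine Finset.sum_equiv (Equiv.swap i (i + 1)) ?_ ?_
      · intro k
        simp only [Finset.mem_Icc]
        rcases eq_or_ne k i with rfl | hki
        · rw [Equiv.swap_apply_left]; omega
        rcases eq_or_ne k (i + 1) with rfl | hki2
        · rw [Equiv.swap_apply_right]; omega
        · rw [Equiv.swap_apply_of_ne_of_ne hki hki2]
      · intro k _
        rw [hNG']
    exact key.ge
end

section
/- There exists an instance of the telescope scheduling problem with 3 nights and 4 observations on which the greedy heuristic (scheduling each night optimally as if it were the last, using remaining observations) is not optimal for the expected total gain: concretely, with observations A (r=0,d=3,p=2,w=1), B (r=1,d=3,p=2,w=1), C (r=0,d=2,p=1,w=2), D (r=1,d=3,p=1,w=2), the greedy solution schedules {C,D} night 1 (gain 4), then one of A,B per night (gains 1,1), while the alternative solution scheduling {A,D} night 1 (gain 3), {B,C} night 2 (gain 3) achieves cumulative gain 6 > 5 after two nights; hence if π = (0,0,1,0) the alternative strictly beats the greedy. -/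
/-! Counterexample instance: stars A,B,C,D = 0,1,2,3 with
A (r=0,d=3,p=2,w=1), B (r=1,d=3,p=2,w=1), C (r=0,d=2,p=1,w=2), D (r=1,d=3,p=1,w=2). -/

def rel : Fin 4 → ℕ := ![0, 1, 0, 1]
def dl  : Fin 4 → ℕ := ![3, 3, 2, 3]
def pt  : Fin 4 → ℕ := ![2, 2, 1, 1]
def wt  : Fin 4 → ℕ := ![1, 1, 2, 2]

/-- A single-night schedule gives each observation an optional integer start
time, within its time window and with pairwise disjoint occupied intervals. -/
def NightFeasible (s : Fin 4 → Option ℕ) : Prop :=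
  (∀ j t, s j = some t → rel j ≤ t ∧ t + pt j ≤ dl j) ∧
  (∀ j k tj tk, j ≠ k → s j = some tj → s k = some tk →
    tj + pt j ≤ tk ∨ tk + pt k ≤ tj)

/-- The gain of a night: sum of the weights of the observations scheduled. -/
def nightGain (s : Fin 4 → Option ℕ) : ℕ :=
  ∑ j : Fin 4, if (s j).isSome then wt j else 0

/-- Greedy: night 1 = {C at 0, D at 1}, night 2 = {A at 0}. -/
def greedy1 : Fin 4 → Option ℕ := ![none, none, some 0, some 1]
def greedy2 : Fin 4 → Option ℕ := ![some 0, none, none, none]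
/-- Alternative: night 1 = {A at 0, D at 2}, night 2 = {B at 1, C at 0}. -/
def alt1 : Fin 4 → Option ℕ := ![some 0, none, none, some 2]
def alt2 : Fin 4 → Option ℕ := ![none, some 1, some 0, none]


def feas' (s : Fin 4 → Option (Fin 3)) : Prop :=
  (∀ j t, s j = some t → rel j ≤ t.val ∧ t.val + pt j ≤ dl j) ∧
  (∀ j k tj tk, j ≠ k → s j = some tj → s k = some tk →
    tj.val + pt j ≤ tk.val ∨ tk.val + pt k ≤ tj.val)

def gain' (s : Fin 4 → Option (Fin 3)) : ℕ :=
  ∑ j : Fin 4, if (s j).isSome then wt j else 0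

set_option maxRecDepth 4000 in
lemma key' : ∀ s, feas' s → gain' s ≤ 4 := by
  unfold feas' gain'; decide

lemma upper (s : Fin 4 → Option ℕ) (hs : NightFeasible s) : nightGain s ≤ 4 := by
  obtain ⟨h1, h2⟩ := hs
  have hlt : ∀ j, ∀ t ∈ s j, t < 3 := by
    intro j t ht
    have := (h1 j t ht).2
    have hp : 1 ≤ pt j := by fin_cases j <;> decide
    have hd : dl j ≤ 3 := by fin_cases j <;> decide
    omega
  set s' : Fin 4 → Option (Fin 3) := fun j =>
    (s j).pmap (fun t h => (⟨t, h⟩ : Fin 3)) (hlt j) with hs'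
  have hsome : ∀ j, (s' j).isSome = (s j).isSome := by
    intro j
    cases hj : s j <;> simp [hs', hj]
  have hval : ∀ j t, s' j = some t → s j = some t.val := by
    intro j t ht
    cases hj : s j with
    | none => simp [hs', hj] at ht
    | some u => simp [hs', hj] at ht; subst ht; rfl
  have : gain' s' ≤ 4 := by
    apply key'
    constructor
    · intro j t ht
      exact h1 j t.val (hval j t ht)
    · intro j k tj tk hne hj hk
      exact h2 j k tj.val tk.val hne (hval j tj hj) (hval k tk hk)
  calc nightGain s = gain' s' := by
        unfold nightGain gain'
        exact Finset.sum_congr rfl (fun j _ => by rw [hsome j])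
      _ ≤ 4 := this

lemma feasg1 : NightFeasible greedy1 := by
  constructor
  · intro j t ht
    revert ht
    fin_cases j <;> simp [greedy1, rel, pt, dl] <;> omega
  · intro j k tj tk hne hj hk
    revert hne hj hk
    fin_cases j <;> fin_cases k <;> simp [greedy1, pt] <;> omega

lemma feasg2 : NightFeasible greedy2 := by
  constructor
  · intro j t ht
    revert ht
    fin_cases j <;> simp [greedy2, rel, pt, dl] <;> omega
  · intro j k tj tk hne hj hk
    revert hne hj hk
    fin_cases j <;> fin_cases k <;> simp [greedy2, pt] <;> omega

lemma feasa1 : NightFeasible alt1 := by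
  constructor
  · intro j t ht
    revert ht
    fin_cases j <;> simp [alt1, rel, pt, dl] <;> omega
  · intro j k tj tk hne hj hk
    revert hne hj hk
    fin_cases j <;> fin_cases k <;> simp [alt1, pt] <;> omega

lemma feasa2 : NightFeasible alt2 := by
  constructor
  · intro j t ht
    revert ht
    fin_cases j <;> simp [alt2, rel, pt, dl] <;> omega
  · intro j k tj tk hne hj hk
    revert hne hj hk
    fin_cases j <;> fin_cases k <;> simp [alt2, pt] <;> omega

/-- the greedy heuristic is not optimal for the expected total
gain on this instance. All four nights are feasible, each observation is used
at most once in each two-night solution, the greedy first night is single-night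
optimal (gain 4, the maximum over all feasible nights), yet with
π = (0,0,1,0) (exactly two nights observable) the greedy cumulative gain 5 is
strictly beaten by the alternative's cumulative gain 6. -/
theorem greedy_not_optimal :
    NightFeasible greedy1 ∧ NightFeasible greedy2 ∧
    NightFeasible alt1 ∧ NightFeasible alt2 ∧
    (∀ j, ¬((greedy1 j).isSome ∧ (greedy2 j).isSome)) ∧
    (∀ j, ¬((alt1 j).isSome ∧ (alt2 j).isSome)) ∧
    nightGain greedy1 = 4 ∧
    (∀ s, NightFeasible s → nightGain s ≤ 4) ∧
    nightGain greedy1 + nightGain greedy2 = 5 ∧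
    nightGain alt1 + nightGain alt2 = 6 ∧
    nightGain greedy1 + nightGain greedy2 <
      nightGain alt1 + nightGain alt2 := by
  exact ⟨feasg1, feasg2, feasa1, feasa2, by decide, by decide, by decide, upper,
    by decide, by decide, by decide⟩
end

section
/- In the counterexample instance with stars A (r=0,d=3,p=2,w=1), B (r=1,d=3,p=2,w=1), C (r=0,d=2,p=1,w=2), D (r=1,d=3,p=1,w=2) and 3 nights of length 3, the maximum total gain achievable in a single night is 4, achieved by scheduling C at time [0,1) and D at times [1,2) (and optionally not A or B, since A and B each need 2 consecutive units). -/
/-- the maximum single-night gain is 4, achieved by scheduling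
C at time 0 (interval [0,1)) and D at time 1 (interval [1,2)). -/
theorem max_single_night_gain_is_four :
    NightFeasible ![none, none, some 0, some 1] ∧
    nightGain ![none, none, some 0, some 1] = 4 ∧
    (∀ s, NightFeasible s → nightGain s ≤ 4) := by
  refine ⟨⟨?_, ?_⟩, ?_, ?_⟩
  · intro j t hj
    fin_cases j <;> (simp [rel, dl, pt] at hj ⊢) <;> omega
  · intro j k tj tk hjk hj hk
    fin_cases j <;> fin_cases k <;>
      first
        | exact absurd rfl hjk
        | ((simp [pt] at hj hk ⊢) <;> omega)
  · simp [nightGain, Fin.sum_univ_four, wt]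
  · rintro s ⟨h1, h2⟩
    by_contra h
    push_neg at h
    simp only [nightGain, Fin.sum_univ_four, wt] at h
    -- need s 2 and s 3 some
    have hC : (s 2).isSome := by
      by_contra hc; simp [hc] at h
      split_ifs at h <;> omega
    have hD : (s 3).isSome := by
      by_contra hc; simp [hc] at h
      split_ifs at h <;> omega
    have hAB : (s 0).isSome ∨ (s 1).isSome := by
      by_contra hc; push_neg at hc
      simp [hc.1, hc.2, hC, hD] at h
    obtain ⟨tC, hCe⟩ := Option.isSome_iff_exists.mp hC
    obtain ⟨tD, hDe⟩ := Option.isSome_iff_exists.mp hD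
    have hC1 := h1 2 tC hCe
    have hD1 := h1 3 tD hDe
    simp [rel, dl, pt] at hC1 hD1
    have hCD := h2 2 3 tC tD (by decide) hCe hDe
    simp [pt] at hCD
    rcases hAB with hA | hB
    · obtain ⟨tA, hAe⟩ := Option.isSome_iff_exists.mp hA
      have hA1 := h1 0 tA hAe
      simp [rel, dl, pt] at hA1
      have hAC := h2 0 2 tA tC (by decide) hAe hCe
      have hAD := h2 0 3 tA tD (by decide) hAe hDe
      simp [pt] at hAC hAD
      omega
    · obtain ⟨tB, hBe⟩ := Option.isSome_iff_exists.mp hB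
      have hB1 := h1 1 tB hBe
      simp [rel, dl, pt] at hB1
      have hBC := h2 1 2 tB tC (by decide) hBe hCe
      have hBD := h2 1 3 tB tD (by decide) hBe hDe
      simp [pt] at hBC hBD
      omega
end

section
/- In the counterexample instance with stars A (r=0,d=3,p=2,w=1), B (r=1,d=3,p=2,w=1), C (r=0,d=2,p=1,w=2), D (r=1,d=3,p=1,w=2), no single night can schedule all four observations, and moreover no single night can achieve gain strictly greater than 4. -/
lemma gain_le (s : Fin 4 → Option ℕ) (hf : NightFeasible s) : nightGain s ≤ 4 := by
  obtain ⟨h1, h2⟩ := hf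
  have hCDA : ∀ tA tC tD, s 0 = some tA → s 2 = some tC → s 3 = some tD → False := by
    intro tA tC tD hA hC hD
    have cA := h1 0 tA hA
    have cC := h1 2 tC hC
    have cD := h1 3 tD hD
    have p1 := h2 0 2 tA tC (by decide) hA hC
    have p2 := h2 0 3 tA tD (by decide) hA hD
    have p3 := h2 2 3 tC tD (by decide) hC hD
    simp [rel, dl, pt] at cA cC cD p1 p2 p3
    omega
  have hCDB : ∀ tB tC tD, s 1 = some tB → s 2 = some tC → s 3 = some tD → False := by
    intro tB tC tD hB hC hD
    have cB := h1 1 tB hB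
    have cC := h1 2 tC hC
    have cD := h1 3 tD hD
    have p1 := h2 1 2 tB tC (by decide) hB hC
    have p2 := h2 1 3 tB tD (by decide) hB hD
    have p3 := h2 2 3 tC tD (by decide) hC hD
    simp [rel, dl, pt] at cB cC cD p1 p2 p3
    omega
  rcases hs0 : s 0 with _ | tA <;> rcases hs1 : s 1 with _ | tB <;>
    rcases hs2 : s 2 with _ | tC <;> rcases hs3 : s 3 with _ | tD <;>
    simp [nightGain, Fin.sum_univ_four, hs0, hs1, hs2, hs3, wt] <;>
    first
      | omega
      | exact hCDA _ _ _ hs0 hs2 hs3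
      | exact hCDB _ _ _ hs1 hs2 hs3

/-- no single night can schedule all four observations, and no
single night achieves a gain strictly greater than 4. -/
theorem no_night_schedules_all_and_gain_le_four :
    (∀ s, NightFeasible s → ¬ (∀ j, (s j).isSome)) ∧
    (∀ s, NightFeasible s → ¬ (4 < nightGain s)) := by
  constructor
  · intro s hf hall
    have h4 := gain_le s hf
    have h6 : nightGain s = 6 := by
      simp [nightGain, Fin.sum_univ_four, hall 0, hall 1, hall 2, hall 3, wt]
    omega
  · intro s hf h
    exact absurd h (by have := gain_le s hf; omega)
end
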